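/- Let 0 < b_i < 1 for all i ∈ ℕ and suppose Σ_{i=1}^∞ b_i^{s₀} = 1 for some s₀ ≥ 0. For each k ≥ 2 let s_k be the unique real with Σ_{i=1}^k b_i^{s_k} = 1. Then (s_k) is monotonically increasing and converges to s₀; that is, s₀ = sup_{k≥2} s_k = lim_{k→∞} s_k. -/

import Mathlib

open Filter

/-- Here `b i` represents `b_{i+1}` of the paper, so that `∑_{i=1}^k b_i` becomes a
sum over `Finset.range k`. -/
theorem stmt_16 (b : ℕ → ℝ) (hb : ∀ i, 0 < b i ∧ b i < 1)
    (s₀ : ℝ) (hs₀ : 0 ≤ s₀) (hsum : ∑' i, b i ^ s₀ = 1)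
    (s : ℕ → ℝ) (hs : ∀ k, 2 ≤ k → ∑ i ∈ Finset.range k, b i ^ s k = 1) :
    (∀ k, 2 ≤ k → s k ≤ s (k + 1)) ∧
    Tendsto s atTop (nhds s₀) ∧
    s₀ = sSup {x : ℝ | ∃ k, 2 ≤ k ∧ x = s k} := by
  have hpos : ∀ (x : ℝ) (i : ℕ), 0 < b i ^ x := fun x i => Real.rpow_pos_of_pos (hb i).1 x
  have hbs : Summable (fun i => b i ^ s₀) := by
    by_contra h
    rw [tsum_eq_zero_of_not_summable h] at hsum
    norm_num at hsum
  -- strict antitonicity of the partial sums as functions of the exponent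
  have hanti : ∀ k, 1 ≤ k → StrictAnti (fun x : ℝ => ∑ i ∈ Finset.range k, b i ^ x) := by
    intro k hk x y hxy
    apply Finset.sum_lt_sum_of_nonempty
    · exact Finset.nonempty_range_iff.mpr (by omega)
    · intro i _
      exact Real.rpow_lt_rpow_of_exponent_gt (hb i).1 (hb i).2 hxy
  -- each s k is strictly below s₀
  have hlt : ∀ k, 2 ≤ k → s k < s₀ := by
    intro k hk
    have h1 : ∑ i ∈ Finset.range k, b i ^ s₀ < 1 := by
      rw [← hsum]
      calc ∑ i ∈ Finset.range k, b i ^ s₀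
          < ∑ i ∈ Finset.range (k + 1), b i ^ s₀ := by
            rw [Finset.sum_range_succ]
            exact lt_add_of_pos_right _ (hpos s₀ k)
        _ ≤ ∑' i, b i ^ s₀ := Summable.sum_le_tsum _ (fun i _ => (hpos s₀ i).le) hbs
    have h2 : (fun x : ℝ => ∑ i ∈ Finset.range k, b i ^ x) s₀
        < (fun x : ℝ => ∑ i ∈ Finset.range k, b i ^ x) (s k) := by
      simpa [hs k hk] using h1
    exact ((hanti k (by omega)).lt_iff_gt).mp h2
  -- monotonicity
  have hmono : ∀ k, 2 ≤ k → s k ≤ s (k + 1) := by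
    intro k hk
    have h2 : (fun x : ℝ => ∑ i ∈ Finset.range (k + 1), b i ^ x) (s (k + 1))
        < (fun x : ℝ => ∑ i ∈ Finset.range (k + 1), b i ^ x) (s k) := by
      simp only
      rw [hs (k + 1) (by omega), Finset.sum_range_succ, hs k hk]
      exact lt_add_of_pos_right _ (hpos (s k) k)
    exact (((hanti (k + 1) (by omega)).lt_iff_gt).mp h2).le
  -- the shifted sequence
  set t : ℕ → ℝ := fun n => s (n + 2) with ht
  have htmono : Monotone t := by
    apply monotone_nat_of_le_succ
    intro n
    simpa [ht, show n + 1 + 2 = n + 2 + 1 by omega] using hmono (n + 2) (by omega)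
  have htbdd : ∀ n, t n ≤ s₀ := fun n => (hlt (n + 2) (by omega)).le
  have hbdd : BddAbove (Set.range t) := ⟨s₀, by rintro x ⟨n, rfl⟩; exact htbdd n⟩
  set L : ℝ := ⨆ n, t n with hL
  have htend : Tendsto t atTop (nhds L) := tendsto_atTop_ciSup htmono hbdd
  have hLle : L ≤ s₀ := ciSup_le htbdd
  have hLge : s₀ ≤ L := by
    by_contra hcon
    push_neg at hcon
    -- partial sums at L are bounded by 1
    have hb1 : ∀ n, ∑ i ∈ Finset.range n, b i ^ L ≤ 1 := by
      intro n
      have h1 : ∑ i ∈ Finset.range n, b i ^ L ≤ ∑ i ∈ Finset.range (n + 2), b i ^ L := by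
        apply Finset.sum_le_sum_of_subset_of_nonneg
        · exact Finset.range_subset_range.mpr (by omega)
        · intro i _ _; exact (hpos L i).le
      have h2 : ∑ i ∈ Finset.range (n + 2), b i ^ L
          ≤ ∑ i ∈ Finset.range (n + 2), b i ^ (t n) := by
        apply Finset.sum_le_sum
        intro i _
        exact Real.rpow_le_rpow_of_exponent_ge (hb i).1 (hb i).2.le
          (le_ciSup hbdd n)
      calc ∑ i ∈ Finset.range n, b i ^ L ≤ _ := h1
        _ ≤ _ := h2
        _ = 1 := hs (n + 2) (by omega)
    have hsumL : Summable (fun i => b i ^ L) :=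
      summable_of_sum_range_le (fun i => (hpos L i).le) hb1
    have htsumL : ∑' i, b i ^ L ≤ 1 :=
      Summable.tsum_le_of_sum_range_le hsumL hb1
    have hstrict : ∑' i, b i ^ s₀ < ∑' i, b i ^ L := by
      apply Summable.tsum_lt_tsum (i := 0)
      · intro i
        exact Real.rpow_le_rpow_of_exponent_ge (hb i).1 (hb i).2.le hcon.le
      · exact Real.rpow_lt_rpow_of_exponent_gt (hb 0).1 (hb 0).2 hcon
      · exact hbs
      · exact hsumL
    rw [hsum] at hstrict
    exact absurd (hstrict.trans_le htsumL) (lt_irrefl 1)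
  have hLeq : L = s₀ := le_antisymm hLle hLge
  rw [hLeq] at htend
  have htendS : Tendsto s atTop (nhds s₀) := (tendsto_add_atTop_iff_nat 2).mp htend
  refine ⟨hmono, htendS, ?_⟩
  -- sSup part
  have hSne : {x : ℝ | ∃ k, 2 ≤ k ∧ x = s k}.Nonempty := ⟨s 2, 2, le_refl 2, rfl⟩
  have hSbdd : BddAbove {x : ℝ | ∃ k, 2 ≤ k ∧ x = s k} := by
    refine ⟨s₀, ?_⟩
    rintro x ⟨k, hk, rfl⟩
    exact (hlt k hk).le
  apply le_antisymm
  · rw [← hLeq, hL]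
    apply ciSup_le
    intro n
    exact le_csSup hSbdd ⟨n + 2, by omega, rfl⟩
  · apply csSup_le hSne
    rintro x ⟨k, hk, rfl⟩
    exact (hlt k hk).le
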